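/- For the choice f(t,s) = t·s/(t+s) (so that μ_n is the distribution of the effective resistance between the endpoints of the n-th 'line-circle-line' graph G_n), the variance V_n of μ_n satisfies V_n^{1/n} → 2 + 1/8 = 17/8 as n → ∞; that is, V_n = (2 + 1/8 + o(1))ⁿ. -/

import Mathlib

open MeasureTheory Filter

/-- The recursively defined sequence of measures: `μ₀ = (δ₁ + δ₂)/2` and `μ_{n+1}` is the
pushforward of `μ_n ⊗ μ_n ⊗ μ_n ⊗ μ_n` under `(a,b,c,d) ↦ a + b + f c d`. -/
noncomputable def mu (f : ℝ → ℝ → ℝ) : ℕ → Measure ℝ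
  | 0 => (2 : ENNReal)⁻¹ • Measure.dirac 1 + (2 : ENNReal)⁻¹ • Measure.dirac 2
  | n + 1 =>
      Measure.map (fun p : ℝ × ℝ × ℝ × ℝ => p.1 + p.2.1 + f p.2.2.1 p.2.2.2)
        ((mu f n).prod ((mu f n).prod ((mu f n).prod (mu f n))))

/-- The mean of `μ_n`. -/
noncomputable def En (f : ℝ → ℝ → ℝ) (n : ℕ) : ℝ := ∫ x, x ∂(mu f n)

/-- The variance of `μ_n`. -/
noncomputable def Vn (f : ℝ → ℝ → ℝ) (n : ℕ) : ℝ := ∫ x, (x - En f n) ^ 2 ∂(mu f n)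

namespace Stmt3

open Real Set Topology

noncomputable def F : ℝ → ℝ → ℝ := fun t s => t * s / (t + s)

lemma measurable_F2 : Measurable (fun p : ℝ × ℝ => F p.1 p.2) :=
  (measurable_fst.mul measurable_snd).div (measurable_fst.add measurable_snd)

lemma measurable_X :
    Measurable (fun p : ℝ × ℝ × ℝ × ℝ => p.1 + p.2.1 + F p.2.2.1 p.2.2.2) :=
  (measurable_fst.add measurable_snd.fst).add
    (measurable_F2.comp (measurable_snd.snd))

lemma mu_succ (f : ℝ → ℝ → ℝ) (n : ℕ) :
    mu f (n + 1) = Measure.map (fun p : ℝ × ℝ × ℝ × ℝ => p.1 + p.2.1 + f p.2.2.1 p.2.2.2)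
      ((mu f n).prod ((mu f n).prod ((mu f n).prod (mu f n)))) := rfl

lemma prob : ∀ n, IsProbabilityMeasure (mu F n)
  | 0 => by
    constructor
    simp [mu, ENNReal.inv_two_add_inv_two]
  | n + 1 => by
    haveI := prob n
    rw [mu_succ]
    exact Measure.isProbabilityMeasure_map measurable_X.aemeasurable

noncomputable def sn (n : ℕ) : ℝ := (5 / 2 : ℝ) ^ n

lemma sn_pos (n : ℕ) : 0 < sn n := pow_pos (by norm_num) n

lemma ae_fst {α β : Type*} [MeasurableSpace α] [MeasurableSpace β] {μ : Measure α}
    {ν : Measure β} [SFinite μ] [SFinite ν] {p : α → Prop} (h : ∀ᵐ x ∂μ, p x) :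
    ∀ᵐ z ∂μ.prod ν, p z.1 :=
  Measure.quasiMeasurePreserving_fst.ae h

lemma ae_snd {α β : Type*} [MeasurableSpace α] [MeasurableSpace β] {μ : Measure α}
    {ν : Measure β} [SFinite μ] [SFinite ν] {p : β → Prop} (h : ∀ᵐ y ∂ν, p y) :
    ∀ᵐ z ∂μ.prod ν, p z.2 :=
  Measure.quasiMeasurePreserving_snd.ae h

lemma F_mem {s c d : ℝ} (hs : 0 < s) (hc : c ∈ Icc s (2 * s)) (hd : d ∈ Icc s (2 * s)) :
    F c d ∈ Icc (s / 2) s := by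
  obtain ⟨hc1, hc2⟩ := hc; obtain ⟨hd1, hd2⟩ := hd
  have hcd : 0 < c + d := by linarith
  simp only [F]
  constructor
  · rw [div_le_div_iff₀ (by norm_num) hcd]
    nlinarith
  · rw [div_le_iff₀ hcd]
    nlinarith

lemma supp : ∀ n, ∀ᵐ x ∂mu F n, x ∈ Icc (sn n) (2 * sn n)
  | 0 => by
    have h1 : (1 : ℝ) ∈ Icc (sn 0) (2 * sn 0) := by norm_num [sn]
    have h2 : (2 : ℝ) ∈ Icc (sn 0) (2 * sn 0) := by norm_num [sn]
    show ∀ᵐ x ∂((2 : ENNReal)⁻¹ • Measure.dirac 1 + (2 : ENNReal)⁻¹ • Measure.dirac 2), _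
    rw [ae_add_measure_iff]
    constructor <;> rw [Measure.ae_ennreal_smul_measure_iff (ENNReal.inv_ne_zero.2 ENNReal.ofNat_ne_top)] <;>
      rw [ae_dirac_eq] <;> simp [h1, h2, mem_Icc.1 h1, mem_Icc.1 h2] <;> norm_num [sn]
  | n + 1 => by
    haveI := prob n
    have h := supp n
    rw [mu_succ]
    refine (ae_map_iff measurable_X.aemeasurable measurableSet_Icc).2 ?_
    filter_upwards [ae_fst h, ae_snd (ae_fst h), ae_snd (ae_snd (ae_fst h)),
      ae_snd (ae_snd (ae_snd h))] with z h1 h2 h3 h4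
    have hf := F_mem (sn_pos n) h3 h4
    have e1 : sn (n + 1) = 5 / 2 * sn n := by simp only [sn, pow_succ]; ring
    constructor
    · rw [e1]; obtain ⟨a1, _⟩ := h1; obtain ⟨b1, _⟩ := h2; obtain ⟨f1, _⟩ := hf; linarith
    · rw [e1]; obtain ⟨_, a2⟩ := h1; obtain ⟨_, b2⟩ := h2; obtain ⟨_, f2⟩ := hf; linarith

section Bdd
variable {α : Type*} [MeasurableSpace α] {μ : Measure α} {g : α → ℝ} {C : ℝ}

structure BddM (μ : Measure α) (g : α → ℝ) (C : ℝ) : Prop where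
  meas : Measurable g
  bdd : ∀ᵐ x ∂μ, |g x| ≤ C

lemma BddM.integrable [IsFiniteMeasure μ] (hg : BddM μ g C) : Integrable g μ :=
  Integrable.mono' (integrable_const C) hg.meas.aestronglyMeasurable
    (by simpa [Real.norm_eq_abs] using hg.bdd)

lemma BddM.abs_integral_le [IsProbabilityMeasure μ] (hg : BddM μ g C) :
    |∫ x, g x ∂μ| ≤ C := by
  have := norm_integral_le_of_norm_le_const (μ := μ) (f := g) (C := C)
    (by simpa [Real.norm_eq_abs] using hg.bdd)
  simpa [Real.norm_eq_abs] using this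

lemma BddM.integral_mem [IsProbabilityMeasure μ] {a b : ℝ} (hm : Measurable g)
    (h : ∀ᵐ x ∂μ, g x ∈ Icc a b) : (∫ x, g x ∂μ) ∈ Icc a b := by
  have hi : Integrable g μ := by
    refine (BddM.mk hm ?_).integrable (C := max |a| |b|)
    filter_upwards [h] with x hx
    rw [abs_le]
    constructor
    · calc -(max |a| |b|) ≤ -|a| := by simp
        _ ≤ a := neg_abs_le a
        _ ≤ g x := hx.1
    · exact le_trans hx.2 (le_trans (le_abs_self b) (le_max_right _ _))
  constructor
  · have := integral_mono_ae (integrable_const a) hi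
      (by filter_upwards [h] with x hx using hx.1)
    simpa using this
  · have := integral_mono_ae hi (integrable_const b)
      (by filter_upwards [h] with x hx using hx.2)
    simpa using this

end Bdd

section Prod
variable {α β : Type*} [MeasurableSpace α] [MeasurableSpace β] {μ : Measure α}
  {ν : Measure β} [IsProbabilityMeasure μ] [IsProbabilityMeasure ν]
  {g : α → ℝ} {h : β → ℝ} {Cg Ch : ℝ}

lemma ae_fst' {p : α → Prop} (hp : ∀ᵐ x ∂μ, p x) : ∀ᵐ z ∂μ.prod ν, p z.1 :=
  Measure.quasiMeasurePreserving_fst.ae hp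

lemma ae_snd' {p : β → Prop} (hp : ∀ᵐ y ∂ν, p y) : ∀ᵐ z ∂μ.prod ν, p z.2 :=
  Measure.quasiMeasurePreserving_snd.ae hp

lemma BddM.pow (hg : BddM μ g C) (i : ℕ) : BddM μ (fun x => g x ^ i) (|C| ^ i) := by
  refine ⟨hg.meas.pow_const i, ?_⟩
  filter_upwards [hg.bdd] with x hx
  calc |g x ^ i| = |g x| ^ i := by rw [abs_pow]
    _ ≤ |C| ^ i := pow_le_pow_left₀ (abs_nonneg _) (hx.trans (le_abs_self C)) i

lemma intAdd {γ : Type*} [MeasurableSpace γ] {m : Measure γ} {f g : γ → ℝ}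
    (hf : Integrable f m) (hg : Integrable g m) :
    Integrable (fun x => f x + g x) m := hf.add hg

lemma prod_mono_int (hg : BddM μ g Cg) (hh : BddM ν h Ch) (i j : ℕ) :
    Integrable (fun z : α × β => g z.1 ^ i * h z.2 ^ j) (μ.prod ν) := by
  refine BddM.integrable ⟨((hg.meas.comp measurable_fst).pow_const i).mul
    ((hh.meas.comp measurable_snd).pow_const j), ?_⟩ (C := |Cg| ^ i * |Ch| ^ j)
  filter_upwards [ae_fst' (hg.pow i).bdd, ae_snd' (hh.pow j).bdd] with z h1 h2
  rw [abs_mul]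
  exact mul_le_mul h1 h2 (abs_nonneg _) (le_trans (abs_nonneg _) h1)

lemma prod_mono_val (g : α → ℝ) (h : β → ℝ) (i j : ℕ) :
    ∫ z : α × β, g z.1 ^ i * h z.2 ^ j ∂(μ.prod ν)
      = (∫ x, g x ^ i ∂μ) * ∫ y, h y ^ j ∂ν :=
  integral_prod_mul (fun x => g x ^ i) (fun y => h y ^ j)

lemma exp1 (hg : BddM μ g Cg) (hh : BddM ν h Ch) :
    ∫ z : α × β, (g z.1 + h z.2) ∂(μ.prod ν) = (∫ x, g x ∂μ) + ∫ y, h y ∂ν := by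
  have e : (fun z : α × β => g z.1 + h z.2)
      = fun z => g z.1 ^ 1 * h z.2 ^ 0 + g z.1 ^ 0 * h z.2 ^ 1 := by funext z; ring
  rw [e, integral_add (prod_mono_int hg hh 1 0) (prod_mono_int hg hh 0 1),
    prod_mono_val, prod_mono_val]
  simp

lemma exp2 (hg : BddM μ g Cg) (hh : BddM ν h Ch) :
    ∫ z : α × β, (g z.1 + h z.2) ^ 2 ∂(μ.prod ν)
      = (∫ x, g x ^ 2 ∂μ) + 2 * (∫ x, g x ∂μ) * (∫ y, h y ∂ν) + ∫ y, h y ^ 2 ∂ν := by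
  have e : (fun z : α × β => (g z.1 + h z.2) ^ 2)
      = fun z => g z.1 ^ 2 * h z.2 ^ 0 + (2 * (g z.1 ^ 1 * h z.2 ^ 1)
          + g z.1 ^ 0 * h z.2 ^ 2) := by funext z; ring
  rw [e, integral_add (prod_mono_int hg hh 2 0)
      (intAdd ((prod_mono_int hg hh 1 1).const_mul 2) (prod_mono_int hg hh 0 2)),
    integral_add ((prod_mono_int hg hh 1 1).const_mul 2) (prod_mono_int hg hh 0 2),
    integral_const_mul, prod_mono_val, prod_mono_val, prod_mono_val]
  simp only [pow_zero, pow_one, integral_const, measure_univ, ENNReal.toReal_one, smul_eq_mul,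
    mul_one, one_mul, probReal_univ]
  ring

lemma exp4 (hg : BddM μ g Cg) (hh : BddM ν h Ch) :
    ∫ z : α × β, (g z.1 + h z.2) ^ 4 ∂(μ.prod ν)
      = (∫ x, g x ^ 4 ∂μ) + 4 * (∫ x, g x ^ 3 ∂μ) * (∫ y, h y ∂ν)
        + 6 * (∫ x, g x ^ 2 ∂μ) * (∫ y, h y ^ 2 ∂ν)
        + 4 * (∫ x, g x ∂μ) * (∫ y, h y ^ 3 ∂ν) + ∫ y, h y ^ 4 ∂ν := by
  have e : (fun z : α × β => (g z.1 + h z.2) ^ 4)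
      = fun z => g z.1 ^ 4 * h z.2 ^ 0 + (4 * (g z.1 ^ 3 * h z.2 ^ 1)
          + (6 * (g z.1 ^ 2 * h z.2 ^ 2) + (4 * (g z.1 ^ 1 * h z.2 ^ 3)
          + g z.1 ^ 0 * h z.2 ^ 4))) := by funext z; ring
  rw [e, integral_add (prod_mono_int hg hh 4 0)
      (intAdd ((prod_mono_int hg hh 3 1).const_mul 4)
        (intAdd ((prod_mono_int hg hh 2 2).const_mul 6)
          (intAdd ((prod_mono_int hg hh 1 3).const_mul 4) (prod_mono_int hg hh 0 4)))),
    integral_add ((prod_mono_int hg hh 3 1).const_mul 4)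
      (intAdd ((prod_mono_int hg hh 2 2).const_mul 6)
        (intAdd ((prod_mono_int hg hh 1 3).const_mul 4) (prod_mono_int hg hh 0 4))),
    integral_add ((prod_mono_int hg hh 2 2).const_mul 6)
      (intAdd ((prod_mono_int hg hh 1 3).const_mul 4) (prod_mono_int hg hh 0 4)),
    integral_add ((prod_mono_int hg hh 1 3).const_mul 4) (prod_mono_int hg hh 0 4),
    integral_const_mul, integral_const_mul, integral_const_mul,
    prod_mono_val, prod_mono_val, prod_mono_val, prod_mono_val, prod_mono_val]
  simp only [pow_zero, pow_one, integral_const, measure_univ, ENNReal.toReal_one, smul_eq_mul,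
    mul_one, one_mul, probReal_univ]
  ring

end Prod

/-! ### Step analysis -/

noncomputable def mean (μ : Measure ℝ) : ℝ := ∫ x, x ∂μ
noncomputable def var (μ : Measure ℝ) : ℝ := ∫ x, (x - mean μ) ^ 2 ∂μ
noncomputable def m4 (μ : Measure ℝ) : ℝ := ∫ x, (x - mean μ) ^ 4 ∂μ
noncomputable def nxt (μ : Measure ℝ) : Measure ℝ :=
  Measure.map (fun p : ℝ × ℝ × ℝ × ℝ => p.1 + p.2.1 + F p.2.2.1 p.2.2.2)
    (μ.prod (μ.prod (μ.prod μ)))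

noncomputable def Gf : ℝ × ℝ → ℝ := fun p => F p.1 p.2
noncomputable def Rf : ℝ × ℝ → ℝ := fun p => (p.1 - p.2) ^ 2 / (4 * (p.1 + p.2))
noncomputable def EG (μ : Measure ℝ) : ℝ := ∫ p, Gf p ∂(μ.prod μ)
noncomputable def Wf (μ : Measure ℝ) : ℝ × ℝ → ℝ := fun p => Gf p - EG μ
noncomputable def EW2 (μ : Measure ℝ) : ℝ := ∫ p, Wf μ p ^ 2 ∂(μ.prod μ)
noncomputable def EW4 (μ : Measure ℝ) : ℝ := ∫ p, Wf μ p ^ 4 ∂(μ.prod μ)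

section Level

variable {μ : Measure ℝ} [IsProbabilityMeasure μ] {s : ℝ}

lemma mean_mem (hs : 0 < s) (hsupp : ∀ᵐ x ∂μ, x ∈ Icc s (2 * s)) :
    mean μ ∈ Icc s (2 * s) :=
  BddM.integral_mem measurable_id hsupp

lemma bdd_id (hs : 0 < s) (hsupp : ∀ᵐ x ∂μ, x ∈ Icc s (2 * s)) :
    BddM μ (fun x : ℝ => x) (2 * s) := by
  refine ⟨measurable_id, ?_⟩
  filter_upwards [hsupp] with x hx
  rw [abs_le]; exact ⟨by linarith [hx.1], hx.2⟩

lemma bdd_gm (hs : 0 < s) (hsupp : ∀ᵐ x ∂μ, x ∈ Icc s (2 * s)) :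
    BddM μ (fun x : ℝ => x - mean μ) s := by
  have hm := mean_mem hs hsupp
  refine ⟨measurable_id.sub_const _, ?_⟩
  filter_upwards [hsupp] with x hx
  rw [abs_le]; constructor <;> [linarith [hx.1, hm.2]; linarith [hx.2, hm.1]]

lemma Ig1 (hs : 0 < s) (hsupp : ∀ᵐ x ∂μ, x ∈ Icc s (2 * s)) :
    ∫ x, (x - mean μ) ∂μ = 0 := by
  rw [integral_sub ((bdd_id hs hsupp).integrable) (integrable_const _), integral_const]
  simp [mean]

lemma var_nonneg' : 0 ≤ var μ := integral_nonneg fun x => sq_nonneg _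
lemma m4_nonneg' : 0 ≤ m4 μ := integral_nonneg fun x => by positivity

lemma var_le (hs : 0 < s) (hsupp : ∀ᵐ x ∂μ, x ∈ Icc s (2 * s)) : var μ ≤ s ^ 2 := by
  have h2 := ((bdd_gm hs hsupp).pow 2)
  have := integral_mono_ae h2.integrable (integrable_const (s ^ 2)) ?_
  · simpa [var] using this
  · filter_upwards [(bdd_gm hs hsupp).bdd] with x hx
    calc (x - mean μ) ^ 2 = |x - mean μ| ^ 2 := (sq_abs _).symm
      _ ≤ s ^ 2 := by nlinarith [abs_nonneg (x - mean μ)]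

lemma m4_le (hs : 0 < s) (hsupp : ∀ᵐ x ∂μ, x ∈ Icc s (2 * s)) :
    m4 μ ≤ s ^ 2 * var μ := by
  have h4 := ((bdd_gm hs hsupp).pow 4)
  have hsq : BddM μ (fun x => s ^ 2 * (x - mean μ) ^ 2) (s ^ 2 * |s| ^ 2) :=
    ((bdd_gm hs hsupp).pow 2).integrable.const_mul (s ^ 2) |> fun _ => ⟨(measurable_id.sub_const _).pow_const 2 |>.const_mul _, by
      filter_upwards [((bdd_gm hs hsupp).pow 2).bdd] with x hx
      rw [abs_mul, abs_of_nonneg (sq_nonneg s)]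
      exact mul_le_mul_of_nonneg_left hx (sq_nonneg s)⟩
  have := integral_mono_ae h4.integrable hsq.integrable ?_
  · rw [m4]
    calc ∫ x, (x - mean μ) ^ 4 ∂μ ≤ ∫ x, s ^ 2 * (x - mean μ) ^ 2 ∂μ := this
      _ = s ^ 2 * var μ := by rw [integral_const_mul]; rfl
  · filter_upwards [(bdd_gm hs hsupp).bdd] with x hx
    have h0 : |x - mean μ| ^ 2 ≤ s ^ 2 := by nlinarith [abs_nonneg (x - mean μ)]
    calc (x - mean μ) ^ 4 = ((x - mean μ) ^ 2) ^ 2 := by ring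
      _ = (|x - mean μ| ^ 2) ^ 2 := by rw [sq_abs]
      _ ≤ s ^ 2 * (x - mean μ) ^ 2 := by rw [← sq_abs (x - mean μ)]; nlinarith [sq_nonneg (|x - mean μ|), abs_nonneg (x - mean μ)]

end Level


section Level2

variable {μ : Measure ℝ} [IsProbabilityMeasure μ] {s : ℝ}

lemma measurable_Gf : Measurable Gf := measurable_F2

lemma measurable_Rf : Measurable Rf :=
  ((measurable_fst.sub measurable_snd).pow_const 2).div
    ((measurable_fst.add measurable_snd).const_mul 4)

lemma hGmem (hs : 0 < s) (hsupp : ∀ᵐ x ∂μ, x ∈ Icc s (2 * s)) :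
    ∀ᵐ p ∂(μ.prod μ), Gf p ∈ Icc (s / 2) s := by
  filter_upwards [ae_fst' hsupp, ae_snd' hsupp] with p h1 h2
  exact F_mem hs h1 h2

lemma EG_mem (hs : 0 < s) (hsupp : ∀ᵐ x ∂μ, x ∈ Icc s (2 * s)) :
    EG μ ∈ Icc (s / 2) s :=
  BddM.integral_mem measurable_Gf (hGmem hs hsupp)

lemma bdd_Gf (hs : 0 < s) (hsupp : ∀ᵐ x ∂μ, x ∈ Icc s (2 * s)) :
    BddM (μ.prod μ) Gf s := by
  refine ⟨measurable_Gf, ?_⟩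
  filter_upwards [hGmem hs hsupp] with p hp
  rw [abs_le]; exact ⟨by nlinarith [hp.1], hp.2⟩

lemma bdd_W (hs : 0 < s) (hsupp : ∀ᵐ x ∂μ, x ∈ Icc s (2 * s)) :
    BddM (μ.prod μ) (Wf μ) s := by
  have hE := EG_mem hs hsupp
  refine ⟨measurable_Gf.sub_const _, ?_⟩
  filter_upwards [hGmem hs hsupp] with p hp
  rw [abs_le]
  constructor <;> [skip; skip] <;> simp only [Wf] <;>
    [linarith [hp.1, hE.2, hs]; linarith [hp.2, hE.1, hs]]

lemma EW0 (hs : 0 < s) (hsupp : ∀ᵐ x ∂μ, x ∈ Icc s (2 * s)) :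
    ∫ p, Wf μ p ∂(μ.prod μ) = 0 := by
  have : ∫ p, Wf μ p ∂(μ.prod μ)
      = ∫ p, Gf p ∂(μ.prod μ) - ∫ _p, EG μ ∂(μ.prod μ) :=
    integral_sub (bdd_Gf hs hsupp).integrable (integrable_const _)
  simp only [Wf] at this ⊢
  rw [this, integral_const]
  simp [EG]

lemma hRmem (hs : 0 < s) (hsupp : ∀ᵐ x ∂μ, x ∈ Icc s (2 * s)) :
    ∀ᵐ p ∂(μ.prod μ), 0 ≤ Rf p ∧ Rf p ≤ s / 8 ∧
      Rf p ^ 2 ≤ (p.1 - p.2) ^ 4 / (64 * s ^ 2) ∧ Gf p = (p.1 + p.2) / 4 - Rf p := by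
  filter_upwards [ae_fst' hsupp, ae_snd' hsupp] with p hc hd
  obtain ⟨hc1, hc2⟩ := hc; obtain ⟨hd1, hd2⟩ := hd
  set c := p.1; set d := p.2
  have hcd : 0 < c + d := by linarith
  have hcd4 : (0:ℝ) < 4 * (c + d) := by linarith
  have hdiff : (c - d) ^ 2 ≤ s ^ 2 := by nlinarith
  refine ⟨div_nonneg (sq_nonneg _) (le_of_lt hcd4), ?_, ?_, ?_⟩
  · simp only [Rf]
    rw [div_le_iff₀ hcd4]
    nlinarith
  · simp only [Rf]
    rw [div_pow, ← pow_mul]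
    rw [div_le_div_iff₀ (by positivity) (by positivity)]
    calc (c - d) ^ (2 * 2) * (64 * s ^ 2) = (c - d) ^ 4 * (64 * s ^ 2) := by norm_num
      _ ≤ (c - d) ^ 4 * (4 * (c + d)) ^ 2 := by
          apply mul_le_mul_of_nonneg_left _ (by positivity)
          nlinarith
  · have hcd' : p.1 + p.2 ≠ 0 := hcd.ne'
    simp only [Gf, Rf, F, c, d]
    field_simp
    ring
end Level2


lemma BddM.mul {α : Type*} [MeasurableSpace α] {μ : Measure α} {f g : α → ℝ} {C D : ℝ}
    (hf : BddM μ f C) (hg : BddM μ g D) : BddM μ (fun x => f x * g x) (|C| * |D|) := by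
  refine ⟨hf.meas.mul hg.meas, ?_⟩
  filter_upwards [hf.bdd, hg.bdd] with x h1 h2
  rw [abs_mul]
  exact mul_le_mul (h1.trans (le_abs_self C)) (h2.trans (le_abs_self D)) (abs_nonneg _)
    (abs_nonneg _)

noncomputable def ERv (μ : Measure ℝ) : ℝ := ∫ p, Rf p ∂(μ.prod μ)
noncomputable def Q2v (μ : Measure ℝ) : ℝ := ∫ p, Rf p ^ 2 ∂(μ.prod μ)

section Level3

variable {μ : Measure ℝ} [IsProbabilityMeasure μ] {s : ℝ}

lemma bdd_R (hs : 0 < s) (hsupp : ∀ᵐ x ∂μ, x ∈ Icc s (2 * s)) :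
    BddM (μ.prod μ) Rf (s / 8) := by
  refine ⟨measurable_Rf, ?_⟩
  filter_upwards [hRmem hs hsupp] with p hp
  rw [abs_le]; exact ⟨by linarith [hp.1, hs], hp.2.1⟩

lemma ER_mem (hs : 0 < s) (hsupp : ∀ᵐ x ∂μ, x ∈ Icc s (2 * s)) :
    ERv μ ∈ Icc 0 (s / 8) :=
  BddM.integral_mem measurable_Rf
    (by filter_upwards [hRmem hs hsupp] with p hp using ⟨hp.1, hp.2.1⟩)

lemma Q2_nonneg : 0 ≤ Q2v μ := integral_nonneg fun p => sq_nonneg _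

lemma bdd_gq (hs : 0 < s) (hsupp : ∀ᵐ x ∂μ, x ∈ Icc s (2 * s)) :
    BddM μ (fun x => (x - mean μ) / 4) (s / 4) := by
  refine ⟨(measurable_id.sub_const _).div_const 4, ?_⟩
  filter_upwards [(bdd_gm hs hsupp).bdd] with x hx
  rw [abs_div]
  rw [show |(4:ℝ)| = 4 by norm_num]
  gcongr
  
lemma igq0 (hs : 0 < s) (hsupp : ∀ᵐ x ∂μ, x ∈ Icc s (2 * s)) :
    ∫ x, (x - mean μ) / 4 ∂μ = 0 := by
  rw [integral_div, Ig1 hs hsupp]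
  norm_num

lemma igq2 (hs : 0 < s) (hsupp : ∀ᵐ x ∂μ, x ∈ Icc s (2 * s)) :
    ∫ x, ((x - mean μ) / 4) ^ 2 ∂μ = var μ / 16 := by
  calc ∫ x, ((x - mean μ) / 4) ^ 2 ∂μ = ∫ x, (x - mean μ) ^ 2 / 16 ∂μ :=
        integral_congr_ae (Filter.Eventually.of_forall fun x => by ring)
    _ = var μ / 16 := by rw [integral_div]; rfl

lemma igq4 (hs : 0 < s) (hsupp : ∀ᵐ x ∂μ, x ∈ Icc s (2 * s)) :
    ∫ x, ((x - mean μ) / 4) ^ 4 ∂μ = m4 μ / 256 := by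
  calc ∫ x, ((x - mean μ) / 4) ^ 4 ∂μ = ∫ x, (x - mean μ) ^ 4 / 256 ∂μ :=
        integral_congr_ae (Filter.Eventually.of_forall fun x => by ring)
    _ = m4 μ / 256 := by rw [integral_div]; rfl

lemma bdd_mm (hs : 0 < s) (hsupp : ∀ᵐ x ∂μ, x ∈ Icc s (2 * s)) :
    BddM μ (fun y => mean μ - y) s := by
  refine ⟨measurable_const.sub measurable_id, ?_⟩
  filter_upwards [(bdd_gm hs hsupp).bdd] with x hx
  rw [abs_sub_comm]
  exact hx

lemma imm0 (hs : 0 < s) (hsupp : ∀ᵐ x ∂μ, x ∈ Icc s (2 * s)) :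
    ∫ y, (mean μ - y) ∂μ = 0 := by
  have : ∫ y, (mean μ - y) ∂μ = ∫ y, -(y - mean μ) ∂μ :=
    integral_congr_ae (Filter.Eventually.of_forall fun x => by ring)
  rw [this, integral_neg, Ig1 hs hsupp, neg_zero]

lemma imm2 : ∫ y, (mean μ - y) ^ 2 ∂μ = var μ := by
  refine integral_congr_ae (Filter.Eventually.of_forall fun x => by ring)

lemma imm4 : ∫ y, (mean μ - y) ^ 4 ∂μ = m4 μ := by
  refine integral_congr_ae (Filter.Eventually.of_forall fun x => by ring)

lemma E4 (hs : 0 < s) (hsupp : ∀ᵐ x ∂μ, x ∈ Icc s (2 * s)) :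
    ∫ p, (p.1 - p.2) ^ 4 ∂(μ.prod μ) = 2 * m4 μ + 6 * (var μ) ^ 2 := by
  have h := exp4 (bdd_gm hs hsupp) (bdd_mm hs hsupp)
  have e : ∫ z : ℝ × ℝ, (z.1 - mean μ + (mean μ - z.2)) ^ 4 ∂(μ.prod μ)
      = ∫ p, (p.1 - p.2) ^ 4 ∂(μ.prod μ) :=
    integral_congr_ae (Filter.Eventually.of_forall fun p => by ring)
  rw [e, imm0 hs hsupp, imm2, imm4, Ig1 hs hsupp] at h
  rw [h]
  have : (∫ x, (x - mean μ) ^ 2 ∂μ) = var μ := rfl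
  have h4 : (∫ x, (x - mean μ) ^ 4 ∂μ) = m4 μ := rfl
  rw [this, h4]
  ring

lemma Q2_le (hs : 0 < s) (hsupp : ∀ᵐ x ∂μ, x ∈ Icc s (2 * s)) :
    Q2v μ ≤ (2 * m4 μ + 6 * (var μ) ^ 2) / (64 * s ^ 2) := by
  have hint2 : Integrable (fun p : ℝ × ℝ => (p.1 - p.2) ^ 4 / (64 * s ^ 2)) (μ.prod μ) := by
    refine BddM.integrable ⟨((measurable_fst.sub measurable_snd).pow_const 4).div_const _, ?_⟩
      (C := (3 * s) ^ 4 / (64 * s ^ 2))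
    filter_upwards [ae_fst' hsupp, ae_snd' hsupp] with p h1 h2
    rw [abs_div, abs_of_nonneg (by positivity : (0:ℝ) ≤ 64 * s ^ 2)]
    gcongr
    rw [abs_pow]
    gcongr
    rw [abs_le]
    constructor <;> [linarith [h1.1, h2.2, hs]; linarith [h1.2, h2.1, hs]]
  have hmono := integral_mono_ae ((bdd_R hs hsupp).pow 2).integrable hint2
    (by filter_upwards [hRmem hs hsupp] with p hp; exact hp.2.2.1)
  calc Q2v μ = ∫ p, Rf p ^ 2 ∂(μ.prod μ) := rfl
    _ ≤ ∫ p, (p.1 - p.2) ^ 4 / (64 * s ^ 2) ∂(μ.prod μ) := hmono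
    _ = (2 * m4 μ + 6 * (var μ) ^ 2) / (64 * s ^ 2) := by
        rw [integral_div, E4 hs hsupp]

lemma EG_eq (hs : 0 < s) (hsupp : ∀ᵐ x ∂μ, x ∈ Icc s (2 * s)) :
    EG μ = mean μ / 2 - ERv μ := by
  have bsum : BddM (μ.prod μ) (fun p : ℝ × ℝ => (p.1 + p.2) / 4) s := by
    refine ⟨(measurable_fst.add measurable_snd).div_const 4, ?_⟩
    filter_upwards [ae_fst' hsupp, ae_snd' hsupp] with p h1 h2
    rw [abs_div, show |(4:ℝ)| = 4 by norm_num, div_le_iff₀ (by norm_num : (0:ℝ) < 4), abs_le]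
    exact ⟨by linarith [h1.1, h2.1, hs], by linarith [h1.2, h2.2]⟩
  have h1 : EG μ = ∫ p, ((p.1 + p.2) / 4 - Rf p) ∂(μ.prod μ) :=
    integral_congr_ae (by filter_upwards [hRmem hs hsupp] with p hp using hp.2.2.2)
  rw [h1, integral_sub bsum.integrable (bdd_R hs hsupp).integrable]
  have h2 : ∫ p : ℝ × ℝ, (p.1 + p.2) / 4 ∂(μ.prod μ) = mean μ / 2 := by
    have e : ∫ p : ℝ × ℝ, (p.1 + p.2) / 4 ∂(μ.prod μ)
        = ∫ p : ℝ × ℝ, (p.1 / 4 + p.2 / 4) ∂(μ.prod μ) :=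
      integral_congr_ae (Filter.Eventually.of_forall fun p => by ring)
    have bq : BddM μ (fun x : ℝ => x / 4) (2 * s / 4) := by
      refine ⟨measurable_id.div_const 4, ?_⟩
      filter_upwards [(bdd_id hs hsupp).bdd] with x hx
      rw [abs_div, show |(4:ℝ)| = 4 by norm_num]
      gcongr
    rw [e, exp1 bq bq, integral_div]
    have hme : (∫ x, x ∂μ) = mean μ := rfl
    rw [hme]
    ring
  rw [h2]
  rfl

lemma W_eq (hs : 0 < s) (hsupp : ∀ᵐ x ∂μ, x ∈ Icc s (2 * s)) :
    ∀ᵐ p ∂(μ.prod μ), Wf μ p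
      = ((p.1 - mean μ) / 4 + (p.2 - mean μ) / 4) - (Rf p - ERv μ) := by
  filter_upwards [hRmem hs hsupp] with p hp
  simp only [Wf]
  rw [hp.2.2.2, EG_eq hs hsupp]
  ring

end Level3


noncomputable def Tf (μ : Measure ℝ) : ℝ × ℝ → ℝ :=
  fun p => (p.1 - mean μ) / 4 + (p.2 - mean μ) / 4
noncomputable def Rtf (μ : Measure ℝ) : ℝ × ℝ → ℝ := fun p => Rf p - ERv μ

section Level4

variable {μ : Measure ℝ} [IsProbabilityMeasure μ] {s : ℝ}

lemma BddM.sub {α : Type*} [MeasurableSpace α] {μ : Measure α} {f g : α → ℝ} {C D : ℝ}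
    (hf : BddM μ f C) (hg : BddM μ g D) : BddM μ (fun x => f x - g x) (C + D) := by
  refine ⟨hf.meas.sub hg.meas, ?_⟩
  filter_upwards [hf.bdd, hg.bdd] with x h1 h2
  calc |f x - g x| ≤ |f x| + |g x| := abs_sub _ _
    _ ≤ C + D := add_le_add h1 h2

lemma intSub {γ : Type*} [MeasurableSpace γ] {m : Measure γ} {f g : γ → ℝ}
    (hf : Integrable f m) (hg : Integrable g m) :
    Integrable (fun x => f x - g x) m := hf.sub hg

lemma bdd_T (hs : 0 < s) (hsupp : ∀ᵐ x ∂μ, x ∈ Icc s (2 * s)) :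
    BddM (μ.prod μ) (Tf μ) (s / 2) := by
  refine ⟨((measurable_fst.sub_const _).div_const 4).add
    ((measurable_snd.sub_const _).div_const 4), ?_⟩
  filter_upwards [ae_fst' (bdd_gq hs hsupp).bdd, ae_snd' (bdd_gq hs hsupp).bdd] with p h1 h2
  calc |Tf μ p| ≤ |(p.1 - mean μ) / 4| + |(p.2 - mean μ) / 4| := abs_add_le _ _
    _ ≤ s / 4 + s / 4 := add_le_add h1 h2
    _ = s / 2 := by ring

lemma bdd_Rt (hs : 0 < s) (hsupp : ∀ᵐ x ∂μ, x ∈ Icc s (2 * s)) :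
    BddM (μ.prod μ) (Rtf μ) (s / 4) := by
  have hE := ER_mem hs hsupp
  refine ⟨measurable_Rf.sub_const _, ?_⟩
  filter_upwards [hRmem hs hsupp] with p hp
  rw [abs_le]
  exact ⟨by simp only [Rtf]; linarith [hp.1, hE.2, hs], by simp only [Rtf]; linarith [hp.2.1, hE.1, hs]⟩

lemma ET2v (hs : 0 < s) (hsupp : ∀ᵐ x ∂μ, x ∈ Icc s (2 * s)) :
    ∫ p, Tf μ p ^ 2 ∂(μ.prod μ) = var μ / 8 := by
  have h := exp2 (bdd_gq hs hsupp) (bdd_gq hs hsupp)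
  rw [igq0 hs hsupp, igq2 hs hsupp] at h
  calc ∫ p, Tf μ p ^ 2 ∂(μ.prod μ)
      = ∫ z : ℝ × ℝ, ((z.1 - mean μ) / 4 + (z.2 - mean μ) / 4) ^ 2 ∂(μ.prod μ) := rfl
    _ = var μ / 8 := by rw [h]; ring

lemma ET4v (hs : 0 < s) (hsupp : ∀ᵐ x ∂μ, x ∈ Icc s (2 * s)) :
    ∫ p, Tf μ p ^ 4 ∂(μ.prod μ) = (2 * m4 μ + 6 * (var μ) ^ 2) / 256 := by
  have h := exp4 (bdd_gq hs hsupp) (bdd_gq hs hsupp)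
  rw [igq0 hs hsupp, igq2 hs hsupp, igq4 hs hsupp] at h
  calc ∫ p, Tf μ p ^ 4 ∂(μ.prod μ)
      = ∫ z : ℝ × ℝ, ((z.1 - mean μ) / 4 + (z.2 - mean μ) / 4) ^ 4 ∂(μ.prod μ) := rfl
    _ = (2 * m4 μ + 6 * (var μ) ^ 2) / 256 := by rw [h]; ring

lemma IRt2 (hs : 0 < s) (hsupp : ∀ᵐ x ∂μ, x ∈ Icc s (2 * s)) :
    ∫ p, Rtf μ p ^ 2 ∂(μ.prod μ) = Q2v μ - (ERv μ) ^ 2 := by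
  have e : ∫ p, Rtf μ p ^ 2 ∂(μ.prod μ)
      = ∫ p, (Rf p ^ 2 - 2 * ERv μ * Rf p + ERv μ ^ 2) ∂(μ.prod μ) :=
    integral_congr_ae (Filter.Eventually.of_forall fun p => by simp only [Rtf]; ring)
  rw [e, integral_add
      (intSub ((bdd_R hs hsupp).pow 2).integrable ((bdd_R hs hsupp).integrable.const_mul _))
      (integrable_const _),
    integral_sub ((bdd_R hs hsupp).pow 2).integrable
      ((bdd_R hs hsupp).integrable.const_mul _),
    integral_const_mul, integral_const]
  simp only [measure_univ, ENNReal.toReal_one, smul_eq_mul, one_mul, probReal_univ]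
  have h1 : (∫ p, Rf p ^ 2 ∂(μ.prod μ)) = Q2v μ := rfl
  have h2 : (∫ p, Rf p ∂(μ.prod μ)) = ERv μ := rfl
  rw [h1, h2]
  ring

lemma ERsq_le (hs : 0 < s) (hsupp : ∀ᵐ x ∂μ, x ∈ Icc s (2 * s)) :
    (ERv μ) ^ 2 ≤ Q2v μ := by
  have h : 0 ≤ ∫ p, Rtf μ p ^ 2 ∂(μ.prod μ) := integral_nonneg fun p => sq_nonneg _
  rw [IRt2 hs hsupp] at h
  linarith

lemma hX_le (hs : 0 < s) (hsupp : ∀ᵐ x ∂μ, x ∈ Icc s (2 * s)) :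
    (2 * m4 μ + 6 * (var μ) ^ 2) / (64 * s ^ 2) ≤ var μ / 8 := by
  rw [div_le_div_iff₀ (by positivity) (by norm_num)]
  nlinarith [m4_le hs hsupp, var_le hs hsupp, var_nonneg' (μ := μ), sq_nonneg s]

lemma EW2_nonneg : 0 ≤ EW2 μ := integral_nonneg fun p => sq_nonneg _

lemma EW2_expand (hs : 0 < s) (hsupp : ∀ᵐ x ∂μ, x ∈ Icc s (2 * s)) :
    EW2 μ = var μ / 8 - 2 * (∫ p, Tf μ p * Rtf μ p ∂(μ.prod μ)) + (Q2v μ - (ERv μ) ^ 2) := by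
  have hEW2eq : EW2 μ = ∫ p, (Tf μ p - Rtf μ p) ^ 2 ∂(μ.prod μ) := by
    refine integral_congr_ae ?_
    filter_upwards [W_eq hs hsupp] with p hp
    rw [show Wf μ p ^ 2 = (((p.1 - mean μ) / 4 + (p.2 - mean μ) / 4) - (Rf p - ERv μ)) ^ 2
      from by rw [hp], Tf, Rtf]
  have e : ∫ p, (Tf μ p - Rtf μ p) ^ 2 ∂(μ.prod μ)
      = ∫ p, (Tf μ p ^ 2 - 2 * (Tf μ p * Rtf μ p) + Rtf μ p ^ 2) ∂(μ.prod μ) :=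
    integral_congr_ae (Filter.Eventually.of_forall fun p => by ring)
  rw [hEW2eq, e, integral_add
      (intSub ((bdd_T hs hsupp).pow 2).integrable
        (((bdd_T hs hsupp).mul (bdd_Rt hs hsupp)).integrable.const_mul 2))
      ((bdd_Rt hs hsupp).pow 2).integrable,
    integral_sub ((bdd_T hs hsupp).pow 2).integrable
      (((bdd_T hs hsupp).mul (bdd_Rt hs hsupp)).integrable.const_mul 2),
    integral_const_mul, ET2v hs hsupp, IRt2 hs hsupp]

end Level4


section Level5

variable {μ : Measure ℝ} [IsProbabilityMeasure μ] {s : ℝ}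

lemma ITR_abs (hs : 0 < s) (hsupp : ∀ᵐ x ∂μ, x ∈ Icc s (2 * s)) {lam : ℝ} (hlam : 0 < lam) :
    |∫ p, Tf μ p * Rtf μ p ∂(μ.prod μ)|
      ≤ (lam * (var μ / 8) + (Q2v μ - (ERv μ) ^ 2) / lam) / 2 := by
  have bT := bdd_T hs hsupp
  have bRt := bdd_Rt hs hsupp
  have step1 : |∫ p, Tf μ p * Rtf μ p ∂(μ.prod μ)| ≤ ∫ p, |Tf μ p * Rtf μ p| ∂(μ.prod μ) := by
    have := norm_integral_le_integral_norm (μ := μ.prod μ) (fun p => Tf μ p * Rtf μ p)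
    simpa only [Real.norm_eq_abs] using this
  have hint : Integrable (fun p : ℝ × ℝ => (lam * Tf μ p ^ 2 + Rtf μ p ^ 2 / lam) / 2)
      (μ.prod μ) :=
    Integrable.div_const (((bT.pow 2).integrable.const_mul lam).add
      ((bRt.pow 2).integrable.div_const lam)) 2
  have step2 : ∫ p, |Tf μ p * Rtf μ p| ∂(μ.prod μ)
      ≤ ∫ p, (lam * Tf μ p ^ 2 + Rtf μ p ^ 2 / lam) / 2 ∂(μ.prod μ) := by
    refine integral_mono_ae ((bT.mul bRt).integrable.abs) hint
      (Filter.Eventually.of_forall fun p => ?_)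
    set a := Tf μ p; set b := Rtf μ p
    have e1 : (lam * a - b) ^ 2 / lam = lam * a ^ 2 + b ^ 2 / lam - 2 * (a * b) := by
      field_simp; ring
    have e2 : (lam * a + b) ^ 2 / lam = lam * a ^ 2 + b ^ 2 / lam + 2 * (a * b) := by
      field_simp; ring
    have p1 : 0 ≤ (lam * a - b) ^ 2 / lam := by positivity
    have p2 : 0 ≤ (lam * a + b) ^ 2 / lam := by positivity
    rw [abs_le]
    constructor <;> linarith
  have step3 : ∫ p, (lam * Tf μ p ^ 2 + Rtf μ p ^ 2 / lam) / 2 ∂(μ.prod μ)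
      = (lam * (var μ / 8) + (Q2v μ - (ERv μ) ^ 2) / lam) / 2 := by
    rw [integral_div, integral_add ((bT.pow 2).integrable.const_mul lam)
        ((bRt.pow 2).integrable.div_const lam),
      integral_const_mul, integral_div, ET2v hs hsupp, IRt2 hs hsupp]
  exact step1.trans (step2.trans (le_of_eq step3))

lemma EW2_le (hs : 0 < s) (hsupp : ∀ᵐ x ∂μ, x ∈ Icc s (2 * s)) : EW2 μ ≤ var μ / 2 := by
  have h1 := ITR_abs hs hsupp (lam := 1) one_pos
  have h2 := EW2_expand hs hsupp
  have h3 := Q2_le hs hsupp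
  have h4 := hX_le hs hsupp
  have h5 := ERsq_le hs hsupp
  have h6 := abs_le.1 h1
  norm_num at h6
  linarith [h6.1, h6.2, sq_nonneg (ERv μ)]

lemma EW2_close (hs : 0 < s) (hsupp : ∀ᵐ x ∂μ, x ∈ Icc s (2 * s)) {lam : ℝ} (hlam : 0 < lam) :
    |EW2 μ - var μ / 8| ≤ lam * var μ / 8
      + (1 + 1 / lam) * ((2 * m4 μ + 6 * (var μ) ^ 2) / (64 * s ^ 2)) := by
  have h1 := ITR_abs hs hsupp hlam
  have h2 := EW2_expand hs hsupp
  have h3 := Q2_le hs hsupp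
  have h5 := ERsq_le hs hsupp
  have h6 := abs_le.1 h1
  set X := (2 * m4 μ + 6 * (var μ) ^ 2) / (64 * s ^ 2) with hX
  have hQX : Q2v μ - (ERv μ) ^ 2 ≤ X := by
    have := sq_nonneg (ERv μ); linarith
  have hQ0 : 0 ≤ Q2v μ - (ERv μ) ^ 2 := by linarith
  have hdiv : (Q2v μ - (ERv μ) ^ 2) / lam ≤ X / lam := by gcongr
  have hring : (1 + 1 / lam) * X = X / lam + X := by ring
  rw [abs_le]
  constructor
  · rw [h2]; linarith [h6.2]
  · rw [h2]; linarith [h6.1]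

lemma EW4_bound (hs : 0 < s) (hsupp : ∀ᵐ x ∂μ, x ∈ Icc s (2 * s)) :
    EW4 μ ≤ (2 * m4 μ + 6 * (var μ) ^ 2) / 16 := by
  have bT := bdd_T hs hsupp
  have bRt := bdd_Rt hs hsupp
  have bR := bdd_R hs hsupp
  have hE := ER_mem hs hsupp
  have hEW4eq : EW4 μ = ∫ p, (Tf μ p - Rtf μ p) ^ 4 ∂(μ.prod μ) := by
    refine integral_congr_ae ?_
    filter_upwards [W_eq hs hsupp] with p hp
    rw [show Wf μ p ^ 4 = (((p.1 - mean μ) / 4 + (p.2 - mean μ) / 4) - (Rf p - ERv μ)) ^ 4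
      from by rw [hp], Tf, Rtf]
  have h1 : ∫ p, (Tf μ p - Rtf μ p) ^ 4 ∂(μ.prod μ)
      ≤ ∫ p, (8 * Tf μ p ^ 4 + 8 * Rtf μ p ^ 4) ∂(μ.prod μ) := by
    refine integral_mono_ae
      (BddM.integrable ((bT.sub bRt).pow 4)) ?_ (Filter.Eventually.of_forall fun p => ?_)
    · exact (((bT.pow 4).integrable.const_mul 8).add ((bRt.pow 4).integrable.const_mul 8))
    · show (Tf μ p - Rtf μ p) ^ 4 ≤ 8 * Tf μ p ^ 4 + 8 * Rtf μ p ^ 4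
      set a := Tf μ p; set b := Rtf μ p
      nlinarith [sq_nonneg (a + b), sq_nonneg (a - b), sq_nonneg (a * b),
        sq_nonneg (a ^ 2 - b ^ 2), sq_nonneg (a ^ 2 + b ^ 2), sq_nonneg ((a - b) ^ 2)]
  have h2 : ∫ p, (8 * Tf μ p ^ 4 + 8 * Rtf μ p ^ 4) ∂(μ.prod μ)
      = 8 * ((2 * m4 μ + 6 * (var μ) ^ 2) / 256) + 8 * ∫ p, Rtf μ p ^ 4 ∂(μ.prod μ) := by
    rw [integral_add ((bT.pow 4).integrable.const_mul 8) ((bRt.pow 4).integrable.const_mul 8),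
      integral_const_mul, integral_const_mul, ET4v hs hsupp]
  have h3 : ∫ p, Rtf μ p ^ 4 ∂(μ.prod μ)
      ≤ ∫ p, (8 * Rf p ^ 4 + 8 * (ERv μ) ^ 4) ∂(μ.prod μ) := by
    refine integral_mono_ae (BddM.integrable (bRt.pow 4))
      (((bR.pow 4).integrable.const_mul 8).add (integrable_const _))
      (Filter.Eventually.of_forall fun p => ?_)
    show Rtf μ p ^ 4 ≤ 8 * Rf p ^ 4 + 8 * ERv μ ^ 4
    simp only [Rtf]
    set a := Rf p; set b := ERv μ
    nlinarith [sq_nonneg (a + b), sq_nonneg (a - b), sq_nonneg (a * b),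
      sq_nonneg (a ^ 2 - b ^ 2), sq_nonneg (a ^ 2 + b ^ 2), sq_nonneg ((a - b) ^ 2)]
  have h4 : ∫ p, (8 * Rf p ^ 4 + 8 * (ERv μ) ^ 4) ∂(μ.prod μ)
      = 8 * (∫ p, Rf p ^ 4 ∂(μ.prod μ)) + 8 * (ERv μ) ^ 4 := by
    rw [integral_add ((bR.pow 4).integrable.const_mul 8) (integrable_const _),
      integral_const_mul, integral_const]
    simp
  have h5 : ∫ p, Rf p ^ 4 ∂(μ.prod μ) ≤ s ^ 2 / 64 * Q2v μ := by
    have := integral_mono_ae (BddM.integrable (bR.pow 4))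
      ((bR.pow 2).integrable.const_mul (s ^ 2 / 64)) ?_
    · calc ∫ p, Rf p ^ 4 ∂(μ.prod μ) ≤ ∫ p, s ^ 2 / 64 * Rf p ^ 2 ∂(μ.prod μ) := this
        _ = s ^ 2 / 64 * Q2v μ := by rw [integral_const_mul]; rfl
    · filter_upwards [hRmem hs hsupp] with p hp
      have hr2 : Rf p ^ 2 ≤ s ^ 2 / 64 := by nlinarith [hp.1, hp.2.1]
      calc Rf p ^ 4 = Rf p ^ 2 * Rf p ^ 2 := by ring
        _ ≤ s ^ 2 / 64 * Rf p ^ 2 := mul_le_mul_of_nonneg_right hr2 (sq_nonneg _)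
  have h6 : (ERv μ) ^ 4 ≤ s ^ 2 / 64 * Q2v μ := by
    have hE2 : (ERv μ) ^ 2 ≤ s ^ 2 / 64 := by nlinarith [hE.1, hE.2, hs]
    calc (ERv μ) ^ 4 = (ERv μ) ^ 2 * (ERv μ) ^ 2 := by ring
      _ ≤ s ^ 2 / 64 * (ERv μ) ^ 2 := mul_le_mul_of_nonneg_right hE2 (sq_nonneg _)
      _ ≤ s ^ 2 / 64 * Q2v μ := mul_le_mul_of_nonneg_left (ERsq_le hs hsupp) (by positivity)
  have h7 : s ^ 2 / 64 * Q2v μ ≤ (2 * m4 μ + 6 * (var μ) ^ 2) / 4096 := by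
    have := Q2_le hs hsupp
    calc s ^ 2 / 64 * Q2v μ ≤ s ^ 2 / 64 * ((2 * m4 μ + 6 * (var μ) ^ 2) / (64 * s ^ 2)) := by
          gcongr
      _ = (2 * m4 μ + 6 * (var μ) ^ 2) / 4096 := by
          field_simp
          ring
  linarith [h1, h2, h3, h4, h5, h6, h7, hEW4eq]

end Level5


noncomputable def Hf (μ : Measure ℝ) : ℝ × ℝ × ℝ → ℝ :=
  fun q => (q.1 - mean μ) + Wf μ q.2

section Next

variable {μ : Measure ℝ} [IsProbabilityMeasure μ] {s : ℝ}

lemma measurable_W : Measurable (Wf μ) := measurable_Gf.sub_const _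

lemma bdd_H (hs : 0 < s) (hsupp : ∀ᵐ x ∂μ, x ∈ Icc s (2 * s)) :
    BddM (μ.prod (μ.prod μ)) (Hf μ) (2 * s) := by
  refine ⟨(measurable_fst.sub_const _).add (measurable_W.comp measurable_snd), ?_⟩
  filter_upwards [ae_fst' (bdd_gm hs hsupp).bdd, ae_snd' (bdd_W hs hsupp).bdd] with q h1 h2
  calc |Hf μ q| ≤ |q.1 - mean μ| + |Wf μ q.2| := abs_add_le _ _
    _ ≤ s + s := add_le_add h1 h2
    _ = 2 * s := by ring

lemma IH0 (hs : 0 < s) (hsupp : ∀ᵐ x ∂μ, x ∈ Icc s (2 * s)) :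
    ∫ q, Hf μ q ∂(μ.prod (μ.prod μ)) = 0 := by
  have h := exp1 (bdd_gm hs hsupp) (bdd_W hs hsupp)
  rw [Ig1 hs hsupp, EW0 hs hsupp] at h
  calc ∫ q, Hf μ q ∂(μ.prod (μ.prod μ))
      = ∫ z : ℝ × ℝ × ℝ, ((z.1 - mean μ) + Wf μ z.2) ∂(μ.prod (μ.prod μ)) := rfl
    _ = 0 := by rw [h]; ring

lemma IH2 (hs : 0 < s) (hsupp : ∀ᵐ x ∂μ, x ∈ Icc s (2 * s)) :
    ∫ q, Hf μ q ^ 2 ∂(μ.prod (μ.prod μ)) = var μ + EW2 μ := by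
  have h := exp2 (bdd_gm hs hsupp) (bdd_W hs hsupp)
  rw [Ig1 hs hsupp, EW0 hs hsupp] at h
  calc ∫ q, Hf μ q ^ 2 ∂(μ.prod (μ.prod μ))
      = ∫ z : ℝ × ℝ × ℝ, ((z.1 - mean μ) + Wf μ z.2) ^ 2 ∂(μ.prod (μ.prod μ)) := rfl
    _ = var μ + EW2 μ := by
        rw [h]
        have e2 : (∫ x, (x - mean μ) ^ 2 ∂μ) = var μ := rfl
        have w2 : (∫ y : ℝ × ℝ, Wf μ y ^ 2 ∂(μ.prod μ)) = EW2 μ := rfl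
        rw [e2, w2]
        ring

lemma IH4 (hs : 0 < s) (hsupp : ∀ᵐ x ∂μ, x ∈ Icc s (2 * s)) :
    ∫ q, Hf μ q ^ 4 ∂(μ.prod (μ.prod μ)) = m4 μ + 6 * var μ * EW2 μ + EW4 μ := by
  have h := exp4 (bdd_gm hs hsupp) (bdd_W hs hsupp)
  rw [Ig1 hs hsupp, EW0 hs hsupp] at h
  calc ∫ q, Hf μ q ^ 4 ∂(μ.prod (μ.prod μ))
      = ∫ z : ℝ × ℝ × ℝ, ((z.1 - mean μ) + Wf μ z.2) ^ 4 ∂(μ.prod (μ.prod μ)) := rfl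
    _ = m4 μ + 6 * var μ * EW2 μ + EW4 μ := by
        rw [h]
        have e2 : (∫ x, (x - mean μ) ^ 2 ∂μ) = var μ := rfl
        have e4 : (∫ x, (x - mean μ) ^ 4 ∂μ) = m4 μ := rfl
        have w2 : (∫ p, Wf μ p ^ 2 ∂(μ.prod μ)) = EW2 μ := rfl
        have w4 : (∫ p, Wf μ p ^ 4 ∂(μ.prod μ)) = EW4 μ := rfl
        rw [e2, e4, w2, w4]
        ring

lemma integral_nxt (g : ℝ → ℝ) (hg : Measurable g) :
    ∫ x, g x ∂(nxt μ)
      = ∫ z, g (z.1 + z.2.1 + F z.2.2.1 z.2.2.2) ∂(μ.prod (μ.prod (μ.prod μ))) :=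
  integral_map measurable_X.aemeasurable hg.aestronglyMeasurable

lemma mean_nxt (hs : 0 < s) (hsupp : ∀ᵐ x ∂μ, x ∈ Icc s (2 * s)) :
    mean (nxt μ) = 2 * mean μ + EG μ := by
  have bIG : BddM (μ.prod μ) Gf s := bdd_Gf hs hsupp
  have bin : BddM (μ.prod (μ.prod μ)) (fun q : ℝ × ℝ × ℝ => q.1 + Gf q.2) (3 * s) := by
    refine ⟨measurable_fst.add (measurable_Gf.comp measurable_snd), ?_⟩
    filter_upwards [ae_fst' (bdd_id hs hsupp).bdd, ae_snd' bIG.bdd] with q h1 h2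
    calc |q.1 + Gf q.2| ≤ |q.1| + |Gf q.2| := abs_add_le _ _
      _ ≤ 2 * s + s := add_le_add h1 h2
      _ = 3 * s := by ring
  have e : ∫ z, (z.1 + z.2.1 + F z.2.2.1 z.2.2.2) ∂(μ.prod (μ.prod (μ.prod μ)))
      = ∫ z : ℝ × ℝ × ℝ × ℝ, (z.1 + (z.2.1 + Gf z.2.2)) ∂(μ.prod (μ.prod (μ.prod μ))) :=
    integral_congr_ae (Filter.Eventually.of_forall fun z => by simp only [Gf]; ring)
  have h1 := exp1 (bdd_id hs hsupp) bin
  have h2 := exp1 (bdd_id hs hsupp) bIG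
  rw [mean, integral_nxt (fun x => x) measurable_id, e, h1, h2]
  have hm : (∫ x, x ∂μ) = mean μ := rfl
  have hg : (∫ p, Gf p ∂(μ.prod μ)) = EG μ := rfl
  rw [hm, hg]
  ring

lemma var_nxt (hs : 0 < s) (hsupp : ∀ᵐ x ∂μ, x ∈ Icc s (2 * s)) :
    var (nxt μ) = 2 * var μ + EW2 μ := by
  rw [var, mean_nxt hs hsupp, integral_nxt (fun x => (x - (2 * mean μ + EG μ)) ^ 2) ((measurable_id.sub_const _).pow_const 2)]
  have e : ∫ z, (z.1 + z.2.1 + F z.2.2.1 z.2.2.2 - (2 * mean μ + EG μ)) ^ 2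
        ∂(μ.prod (μ.prod (μ.prod μ)))
      = ∫ z : ℝ × ℝ × ℝ × ℝ, ((z.1 - mean μ) + Hf μ z.2) ^ 2
        ∂(μ.prod (μ.prod (μ.prod μ))) :=
    integral_congr_ae (Filter.Eventually.of_forall fun z => by
      simp only [Hf, Wf, Gf]; ring)
  rw [e, exp2 (bdd_gm hs hsupp) (bdd_H hs hsupp), Ig1 hs hsupp, IH0 hs hsupp,
    IH2 hs hsupp]
  have e2 : (∫ x, (x - mean μ) ^ 2 ∂μ) = var μ := rfl
  rw [e2]
  ring

lemma m4_nxt (hs : 0 < s) (hsupp : ∀ᵐ x ∂μ, x ∈ Icc s (2 * s)) :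
    m4 (nxt μ) = 2 * m4 μ + 6 * (var μ) ^ 2 + 12 * var μ * EW2 μ + EW4 μ := by
  rw [m4, mean_nxt hs hsupp, integral_nxt (fun x => (x - (2 * mean μ + EG μ)) ^ 4) ((measurable_id.sub_const _).pow_const 4)]
  have e : ∫ z, (z.1 + z.2.1 + F z.2.2.1 z.2.2.2 - (2 * mean μ + EG μ)) ^ 4
        ∂(μ.prod (μ.prod (μ.prod μ)))
      = ∫ z : ℝ × ℝ × ℝ × ℝ, ((z.1 - mean μ) + Hf μ z.2) ^ 4
        ∂(μ.prod (μ.prod (μ.prod μ))) :=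
    integral_congr_ae (Filter.Eventually.of_forall fun z => by
      simp only [Hf, Wf, Gf]; ring)
  rw [e, exp4 (bdd_gm hs hsupp) (bdd_H hs hsupp), Ig1 hs hsupp, IH0 hs hsupp,
    IH2 hs hsupp, IH4 hs hsupp]
  have e2 : (∫ x, (x - mean μ) ^ 2 ∂μ) = var μ := rfl
  have e4 : (∫ x, (x - mean μ) ^ 4 ∂μ) = m4 μ := rfl
  rw [e2, e4]
  ring

end Next


/-! ### Base case computations and induction -/

lemma mu0_eq : mu F 0
    = (2 : ENNReal)⁻¹ • Measure.dirac 1 + (2 : ENNReal)⁻¹ • Measure.dirac 2 := rfl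

lemma bdd0 : ∀ᵐ x ∂(mu F 0), x ∈ Icc (1:ℝ) 2 := by
  have h := supp 0
  simpa [sn] using h

lemma int_mu0 {g : ℝ → ℝ} (hg : Measurable g) {C : ℝ} (hb : ∀ᵐ x ∂(mu F 0), |g x| ≤ C) :
    ∫ x, g x ∂(mu F 0) = (g 1 + g 2) / 2 := by
  haveI := prob 0
  have hint : Integrable g (mu F 0) := (BddM.mk hg hb).integrable
  rw [mu0_eq] at hint ⊢
  rw [integral_add_measure hint.left_of_add_measure hint.right_of_add_measure,
    integral_smul_measure, integral_smul_measure, integral_dirac, integral_dirac]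
  have : ((2 : ENNReal)⁻¹).toReal = 1 / 2 := by
    rw [ENNReal.toReal_inv]
    norm_num
  rw [this]
  simp only [smul_eq_mul]
  ring

lemma mean0 : mean (mu F 0) = 3 / 2 := by
  rw [mean, int_mu0 (g := fun x => x) measurable_id (C := 2)
    (by filter_upwards [bdd0] with x hx; rw [abs_le]; exact ⟨by linarith [hx.1], hx.2⟩)]
  norm_num

lemma var0 : var (mu F 0) = 1 / 4 := by
  rw [var, mean0, int_mu0 (g := fun x => (x - 3/2) ^ 2) ((measurable_id.sub_const _).pow_const 2) (C := 1)
    (by filter_upwards [bdd0] with x hx; rw [abs_le]; constructor <;> nlinarith [hx.1, hx.2])]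
  norm_num

lemma m40 : m4 (mu F 0) = 1 / 16 := by
  rw [m4, mean0, int_mu0 (g := fun x => (x - 3/2) ^ 4) ((measurable_id.sub_const _).pow_const 4) (C := 1)
    (by filter_upwards [bdd0] with x hx
        have h2 : (x - 3/2) ^ 2 ≤ 1/4 := by nlinarith [hx.1, hx.2]
        have h4 : (x - 3/2) ^ 4 ≤ 1/16 := by nlinarith [sq_nonneg (x - 3/2), h2]
        rw [abs_le]
        constructor <;> nlinarith [sq_nonneg ((x - 3/2) ^ 2)])]
  norm_num

lemma mu_succ_nxt (n : ℕ) : mu F (n + 1) = nxt (mu F n) := rfl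

lemma bounds : ∀ n : ℕ, (1/4) * 2 ^ n ≤ var (mu F n) ∧ var (mu F n) ≤ (1/4) * (5/2) ^ n
    ∧ m4 (mu F n) ≤ (3/16) * (25/4) ^ n
  | 0 => by rw [var0, m40]; norm_num
  | n + 1 => by
    haveI := prob n
    obtain ⟨ih1, ih2, ih3⟩ := bounds n
    have hs := sn_pos n
    have hsupp := supp n
    have hV0 : 0 ≤ var (mu F n) := var_nonneg'
    have hE20 : 0 ≤ EW2 (mu F n) := EW2_nonneg
    have hE2le := EW2_le hs hsupp
    have hE4 := EW4_bound hs hsupp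
    have hveq : var (mu F (n+1)) = 2 * var (mu F n) + EW2 (mu F n) := by
      rw [mu_succ_nxt]; exact var_nxt hs hsupp
    have hmeq : m4 (mu F (n+1)) = 2 * m4 (mu F n) + 6 * (var (mu F n)) ^ 2
        + 12 * var (mu F n) * EW2 (mu F n) + EW4 (mu F n) := by
      rw [mu_succ_nxt]; exact m4_nxt hs hsupp
    have hPQ : ((5/2:ℝ)) ^ n * ((5/2:ℝ)) ^ n = (25/4:ℝ) ^ n := by
      rw [← mul_pow]; norm_num
    have hV2 : (var (mu F n)) ^ 2 ≤ (1/16) * (25/4:ℝ) ^ n := by nlinarith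
    have h12 : 12 * var (mu F n) * EW2 (mu F n) ≤ 6 * (var (mu F n)) ^ 2 := by nlinarith
    have hps1 : (2:ℝ) ^ (n+1) = 2 ^ n * 2 := pow_succ _ _
    have hps2 : ((5:ℝ)/2) ^ (n+1) = (5/2) ^ n * (5/2) := pow_succ _ _
    have hps3 : ((25:ℝ)/4) ^ (n+1) = (25/4) ^ n * (25/4) := pow_succ _ _
    refine ⟨?_, ?_, ?_⟩
    · rw [hveq, hps1]; linarith
    · rw [hveq, hps2]; linarith
    · rw [hmeq, hps3]; linarith

lemma var_pos (n : ℕ) : 0 < var (mu F n) :=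
  lt_of_lt_of_le (by positivity) (bounds n).1

set_option maxHeartbeats 1000000 in
lemma key (n : ℕ) : |var (mu F (n+1)) - 17/8 * var (mu F n)|
    ≤ ((1/8) * (3/4:ℝ) ^ n + (3/32) * (8/9:ℝ) ^ n) * var (mu F n) := by
  haveI := prob n
  obtain ⟨ih1, ih2, ih3⟩ := bounds n
  have hs := sn_pos n
  have hsupp := supp n
  have hV0 : 0 ≤ var (mu F n) := var_nonneg'
  set V := var (mu F n) with hVdef
  set M4 := m4 (mu F n) with hM4def
  have hlam : (0:ℝ) < (3/4:ℝ) ^ n := by positivity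
  have hclose := EW2_close hs hsupp hlam
  have hveq : var (mu F (n+1)) = 2 * V + EW2 (mu F n) := by
    rw [mu_succ_nxt]; exact var_nxt hs hsupp
  have hsq : sn n ^ 2 = (25/4:ℝ) ^ n := by
    rw [sn, ← pow_mul, mul_comm, pow_mul]; norm_num
  rw [hsq] at hclose
  have hQpos : (0:ℝ) < (25/4:ℝ) ^ n := by positivity
  -- bound X
  have hPQ : ((5/2:ℝ)) ^ n * ((5/2:ℝ)) ^ n = (25/4:ℝ) ^ n := by
    rw [← mul_pow]; norm_num
  have h43 : (1:ℝ) ≤ (4/3:ℝ) ^ n := by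
    have := pow_le_pow_left₀ (by norm_num : (0:ℝ) ≤ 1) (by norm_num : (1:ℝ) ≤ 4/3) n
    simpa using this
  have h23_2 : (2/3:ℝ) ^ n * 2 ^ n = (4/3:ℝ) ^ n := by rw [← mul_pow]; norm_num
  have h23_52 : (2/3:ℝ) ^ n * (5/2:ℝ) ^ n = (5/3:ℝ) ^ n := by rw [← mul_pow]; norm_num
  have h53 : (1:ℝ) ≤ (5/3:ℝ) ^ n := by
    have := pow_le_pow_left₀ (by norm_num : (0:ℝ) ≤ 1) (by norm_num : (1:ℝ) ≤ 5/3) n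
    simpa using this
  have hXle : (2 * M4 + 6 * V ^ 2) / (64 * (25/4:ℝ) ^ n) ≤ (3/64) * (2/3:ℝ) ^ n * V := by
    rw [div_le_iff₀ (by positivity)]
    have hA : (3/8) * (25/4:ℝ) ^ n ≤ (3/2) * ((2/3:ℝ) ^ n * V) * (25/4:ℝ) ^ n := by
      have h1 : (1/4:ℝ) ≤ (2/3:ℝ) ^ n * V := by
        have : (1/4:ℝ) * (4/3:ℝ) ^ n ≤ (2/3:ℝ) ^ n * V := by
          calc (1/4:ℝ) * (4/3:ℝ) ^ n = (2/3:ℝ) ^ n * ((1/4) * 2 ^ n) := by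
                rw [← h23_2]; ring
            _ ≤ (2/3:ℝ) ^ n * V := by
                apply mul_le_mul_of_nonneg_left ih1 (by positivity)
        nlinarith
      nlinarith
    have hB : (3/2) * V * (5/2:ℝ) ^ n ≤ (3/2) * ((2/3:ℝ) ^ n * V) * (25/4:ℝ) ^ n := by
      have h2 : (5/2:ℝ) ^ n ≤ (2/3:ℝ) ^ n * (25/4:ℝ) ^ n := by
        calc (5/2:ℝ) ^ n = 1 * (5/2:ℝ) ^ n := by ring
          _ ≤ (5/3:ℝ) ^ n * (5/2:ℝ) ^ n := by
              apply mul_le_mul_of_nonneg_right h53 (by positivity)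
          _ = (2/3:ℝ) ^ n * (25/4:ℝ) ^ n := by rw [← hPQ, ← h23_52]; ring
      nlinarith [mul_le_mul_of_nonneg_left h2 hV0]
    have h6V2 : 6 * V ^ 2 ≤ (3/2) * V * (5/2:ℝ) ^ n := by nlinarith
    have h2M4 : 2 * M4 ≤ (3/8) * (25/4:ℝ) ^ n := by linarith
    calc 2 * M4 + 6 * V ^ 2 ≤ (3/2) * ((2/3:ℝ) ^ n * V) * (25/4:ℝ) ^ n
          + (3/2) * ((2/3:ℝ) ^ n * V) * (25/4:ℝ) ^ n := by linarith
      _ = 3/64 * (2/3:ℝ) ^ n * V * (64 * (25/4:ℝ) ^ n) := by ring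
  have hlaminv : 1 / (3/4:ℝ) ^ n = (4/3:ℝ) ^ n := by
    rw [one_div, ← inv_pow]; norm_num
  have hXpos : 0 ≤ (2 * M4 + 6 * V ^ 2) / (64 * (25/4:ℝ) ^ n) := by
    have hM40 : 0 ≤ M4 := m4_nonneg'
    positivity
  have h4323 : (4/3:ℝ) ^ n * (2/3:ℝ) ^ n = (8/9:ℝ) ^ n := by rw [← mul_pow]; norm_num
  have h2389 : (2/3:ℝ) ^ n ≤ (8/9:ℝ) ^ n :=
    pow_le_pow_left₀ (by norm_num) (by norm_num) n
  have hfinal : (1 + 1 / (3/4:ℝ) ^ n) * ((2 * M4 + 6 * V ^ 2) / (64 * (25/4:ℝ) ^ n))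
      ≤ (3/32) * (8/9:ℝ) ^ n * V := by
    calc (1 + 1 / (3/4:ℝ) ^ n) * ((2 * M4 + 6 * V ^ 2) / (64 * (25/4:ℝ) ^ n))
        ≤ (1 + 1 / (3/4:ℝ) ^ n) * ((3/64) * (2/3:ℝ) ^ n * V) := by
          apply mul_le_mul_of_nonneg_left hXle
          rw [hlaminv]; positivity
      _ = (3/64) * (2/3:ℝ) ^ n * V + (3/64) * ((4/3:ℝ) ^ n * (2/3:ℝ) ^ n) * V := by
          rw [hlaminv]; ring
      _ = (3/64) * (2/3:ℝ) ^ n * V + (3/64) * (8/9:ℝ) ^ n * V := by rw [h4323]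
      _ ≤ (3/64) * (8/9:ℝ) ^ n * V + (3/64) * (8/9:ℝ) ^ n * V := by
          have := mul_le_mul_of_nonneg_right (mul_le_mul_of_nonneg_left h2389
            (by norm_num : (0:ℝ) ≤ 3/64)) hV0
          linarith
      _ = (3/32) * (8/9:ℝ) ^ n * V := by ring
  have habs : |var (mu F (n+1)) - 17/8 * V| = |EW2 (mu F n) - V / 8| := by
    rw [hveq]; congr 1; ring
  rw [habs]
  calc |EW2 (mu F n) - V / 8|
      ≤ (3/4:ℝ) ^ n * V / 8
        + (1 + 1 / (3/4:ℝ) ^ n) * ((2 * M4 + 6 * V ^ 2) / (64 * (25/4:ℝ) ^ n)) := hclose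
    _ ≤ (1/8) * (3/4:ℝ) ^ n * V + (3/32) * (8/9:ℝ) ^ n * V := by linarith
    _ = ((1/8) * (3/4:ℝ) ^ n + (3/32) * (8/9:ℝ) ^ n) * V := by ring


/-! ### Final limit -/

lemma eps_tendsto :
    Tendsto (fun n : ℕ => (1/8) * (3/4:ℝ) ^ n + (3/32) * (8/9:ℝ) ^ n) atTop (𝓝 0) := by
  have h1 := tendsto_pow_atTop_nhds_zero_of_lt_one (by norm_num : (0:ℝ) ≤ 3/4)
    (by norm_num : (3/4:ℝ) < 1)
  have h2 := tendsto_pow_atTop_nhds_zero_of_lt_one (by norm_num : (0:ℝ) ≤ 8/9)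
    (by norm_num : (8/9:ℝ) < 1)
  have := (h1.const_mul (1/8:ℝ)).add (h2.const_mul (3/32:ℝ))
  simpa using this

lemma ratio_tendsto :
    Tendsto (fun n : ℕ => var (mu F (n+1)) / var (mu F n)) atTop (𝓝 (17/8)) := by
  rw [tendsto_iff_dist_tendsto_zero]
  apply squeeze_zero (fun n => dist_nonneg) _ eps_tendsto
  intro n
  rw [Real.dist_eq]
  have hv := var_pos n
  have e : var (mu F (n+1)) / var (mu F n) - 17/8
      = (var (mu F (n+1)) - 17/8 * var (mu F n)) / var (mu F n) := by
    field_simp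
  rw [e, abs_div, abs_of_pos hv, div_le_iff₀ hv]
  exact key n

lemma log_avg :
    Tendsto (fun n : ℕ => (n:ℝ)⁻¹ * Real.log (var (mu F n))) atTop
      (𝓝 (Real.log (17/8))) := by
  have hc := (ratio_tendsto.log (by norm_num)).cesaro
  have hsum : ∀ n : ℕ, ∑ i ∈ Finset.range n, Real.log (var (mu F (i+1)) / var (mu F i))
      = Real.log (var (mu F n)) - Real.log (var (mu F 0)) := by
    intro n
    have hcg : ∀ i ∈ Finset.range n,
        Real.log (var (mu F (i+1)) / var (mu F i))
          = Real.log (var (mu F (i+1))) - Real.log (var (mu F i)) :=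
      fun i _ => Real.log_div (var_pos _).ne' (var_pos _).ne'
    rw [Finset.sum_congr rfl hcg, Finset.sum_range_sub (fun i => Real.log (var (mu F i)))]
  have hc' : Tendsto (fun n : ℕ =>
      (n:ℝ)⁻¹ * (Real.log (var (mu F n)) - Real.log (var (mu F 0)))) atTop
      (𝓝 (Real.log (17/8))) :=
    hc.congr (fun n => by rw [hsum n])
  have hzero : Tendsto (fun n : ℕ => (n:ℝ)⁻¹ * Real.log (var (mu F 0))) atTop (𝓝 0) := by
    simpa using tendsto_inv_atTop_nhds_zero_nat.mul_const (Real.log (var (mu F 0)))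
  have hadd := hc'.add hzero
  rw [add_zero] at hadd
  exact hadd.congr (fun n => by ring)

lemma main_limit :
    Tendsto (fun n : ℕ => var (mu F n) ^ (1 / (n:ℝ))) atTop (𝓝 (17/8:ℝ)) := by
  have hexp : Tendsto (fun n : ℕ => Real.exp (Real.log (var (mu F n)) * (1/(n:ℝ)))) atTop
      (𝓝 (17/8:ℝ)) := by
    have h1 : Tendsto (fun n : ℕ => Real.log (var (mu F n)) * (1/(n:ℝ))) atTop
        (𝓝 (Real.log (17/8))) := by
      refine log_avg.congr (fun n => by rw [one_div]; ring)
    have h2 := (Real.continuous_exp.continuousAt (x := Real.log (17/8))).tendsto.comp h1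
    rwa [Real.exp_log (by norm_num : (0:ℝ) < 17/8)] at h2
  refine hexp.congr' ?_
  filter_upwards [eventually_ge_atTop 1] with n hn
  rw [Real.rpow_def_of_pos (var_pos n)]

theorem stmt3' :
    Tendsto (fun n : ℕ => Vn (fun t s => t * s / (t + s)) n ^ (1 / (n : ℝ)))
      atTop (nhds (2 + 1 / 8)) := by
  have h : (2 + 1/8 : ℝ) = 17/8 := by norm_num
  rw [h]
  exact main_limit

end Stmt3

/-- For `f(t,s) = ts/(t+s)` (parallel resistance), the variance of the effective resistance
of the "line-circle-line" graph `G_n` is of order `(2 + 1/8 + o(1))ⁿ`. -/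
theorem stmt3 :
    Tendsto (fun n : ℕ => Vn (fun t s => t * s / (t + s)) n ^ (1 / (n : ℝ)))
      atTop (nhds (2 + 1 / 8)) :=
  Stmt3.stmt3'
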